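/- Let Q be a faithful quandle. If LMlt(Q) has two nontrivial normal subgroups N and M with N ∩ M = 1, then Q is subdirectly reducible: there exist two congruences of Q, each different from the equality relation, whose intersection is the equality relation. -/

import Mathlib

/-- A quandle structure on `Q`, given by its left translations: each `L x` is a
permutation of `Q`, `x * x = x`, and `x * (y * z) = (x * y) * (x * z)`
(writing `x * y` for `L x y`). -/
structure QuandleStr (Q : Type*) where
  L : Q → Equiv.Perm Q
  idem : ∀ x : Q, L x x = x
  selfDistrib : ∀ x y z : Q, L x (L y z) = L (L x y) (L x z)

namespace QuandleStr

variable {Q : Type*} (S : QuandleStr Q)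

/-- The left multiplication group `LMlt(Q)`, generated by all left translations. -/
def Lmlt : Subgroup (Equiv.Perm Q) :=
  Subgroup.closure (Set.range S.L)

/-- The displacement group `Dis(Q)`, generated by all `L x * (L y)⁻¹`. -/
def Dis : Subgroup (Equiv.Perm Q) :=
  Subgroup.closure {g : Equiv.Perm Q | ∃ x y : Q, g = S.L x * (S.L y)⁻¹}

/-- A congruence of the quandle: an equivalence relation compatible with `*` and `\`. -/
def IsCong (θ : Setoid Q) : Prop :=
  ∀ x y u v : Q, θ.r x y → θ.r u v →
    θ.r (S.L x u) (S.L y v) ∧ θ.r ((S.L x)⁻¹ u) ((S.L y)⁻¹ v)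

/-- A quandle is faithful if `x ↦ L x` is injective. -/
def Faithful : Prop := Function.Injective S.L

/-- A quandle is connected if `LMlt(Q)` acts transitively. -/
def Connected : Prop := ∀ x y : Q, ∃ g ∈ S.Lmlt, g x = y

/-- A quandle is latin if all right translations are bijective. -/
def Latin : Prop := ∀ y : Q, Function.Bijective fun x : Q => S.L x y

/-- `θ` is a minimal congruence: not equality, and the only congruence strictly
contained in it is equality. -/
def IsMinCong (θ : Setoid Q) : Prop :=
  S.IsCong θ ∧ θ ≠ ⊥ ∧ ∀ β : Setoid Q, S.IsCong β → β < θ → β = ⊥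

/-- `θ` is a maximal congruence: not the all relation, and the only congruence strictly
containing it is the all relation. -/
def IsMaxCong (θ : Setoid Q) : Prop :=
  S.IsCong θ ∧ θ ≠ ⊤ ∧ ∀ β : Setoid Q, S.IsCong β → θ < β → β = ⊤

/-- `Dis_α`: the subgroup generated by the `L x * (L y)⁻¹` with `x α y`. -/
def DisC (r : Q → Q → Prop) : Subgroup (Equiv.Perm Q) :=
  Subgroup.closure {g : Equiv.Perm Q | ∃ x y : Q, r x y ∧ g = S.L x * (S.L y)⁻¹}

/-- `Dis^α`: the elements of `Dis(Q)` displacing every point inside its `α`-class. -/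
def DisUp (θ : Setoid Q) : Subgroup (Equiv.Perm Q) where
  carrier := {g : Equiv.Perm Q | g ∈ S.Dis ∧ ∀ x : Q, θ.r (g x) x}
  one_mem' := ⟨S.Dis.one_mem, fun x => θ.iseqv.refl x⟩
  mul_mem' := by
    rintro a b ⟨ha, ha2⟩ ⟨hb, hb2⟩
    refine ⟨S.Dis.mul_mem ha hb, fun x => ?_⟩
    rw [Equiv.Perm.mul_apply]
    exact θ.iseqv.trans (ha2 (b x)) (hb2 x)
  inv_mem' := by
    rintro a ⟨ha, ha2⟩
    refine ⟨S.Dis.inv_mem ha, fun x => ?_⟩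
    have h := ha2 (a⁻¹ x)
    rw [show a (a⁻¹ x) = x from a.apply_symm_apply x] at h
    exact θ.iseqv.symm h

end QuandleStr

/-- The orbit equivalence relation of a subgroup of permutations. -/
def orbSetoid {Q : Type*} (N : Subgroup (Equiv.Perm Q)) : Setoid Q where
  r x y := ∃ n ∈ N, n x = y
  iseqv := by
    refine ⟨fun x => ⟨1, N.one_mem, rfl⟩, ?_, ?_⟩
    · rintro x y ⟨n, hn, rfl⟩
      exact ⟨n⁻¹, N.inv_mem hn, n.symm_apply_apply x⟩
    · rintro x y z ⟨n, hn, rfl⟩ ⟨m, hm, rfl⟩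
      exact ⟨m * n, N.mul_mem hm hn, Equiv.Perm.mul_apply m n x⟩


theorem conj_L {Q : Type*} (S : QuandleStr Q) {g : Equiv.Perm Q} (hg : g ∈ S.Lmlt)
    (x : Q) : g * S.L x * g⁻¹ = S.L (g x) := by
  have key : ∀ g ∈ S.Lmlt, ∀ x : Q, g * S.L x * g⁻¹ = S.L (g x) := by
    intro g hg
    refine Subgroup.closure_induction ?_ ?_ ?_ ?_ hg
    · rintro _ ⟨z, rfl⟩ x
      ext w
      simp only [Equiv.Perm.mul_apply]
      rw [S.selfDistrib]
      simp
    · intro x; simp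
    · intro a b ha hb iha ihb x
      have : a * b * S.L x * (a * b)⁻¹ = a * (b * S.L x * b⁻¹) * a⁻¹ := by
        group
      rw [this, ihb, iha]
      simp [Equiv.Perm.mul_apply]
    · intro a ha iha x
      have h := iha (a⁻¹ x)
      have h2 : a⁻¹ * (a * S.L (a⁻¹ x) * a⁻¹) * a = S.L (a⁻¹ x) := by group
      rw [h] at h2
      simp only [show a (a⁻¹ x) = x from a.apply_symm_apply x] at h2
      rw [← h2]
      group
  exact key g hg x

theorem orb_cong {Q : Type*} (S : QuandleStr Q) (N : Subgroup (Equiv.Perm Q))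
    (hNle : N ≤ S.Lmlt)
    (hNnorm : ∀ g ∈ S.Lmlt, ∀ n ∈ N, g * n * g⁻¹ ∈ N) :
    S.IsCong (orbSetoid N) := by
  have hLmem : ∀ x : Q, S.L x ∈ S.Lmlt := fun x =>
    Subgroup.subset_closure ⟨x, rfl⟩
  rintro x y u v ⟨n, hn, rfl⟩ ⟨m, hm, rfl⟩
  constructor
  · refine ⟨n * S.L x * n⁻¹ * m * (S.L x)⁻¹, ?_, ?_⟩
    · have h1 : n * S.L x * n⁻¹ * m * (S.L x)⁻¹
          = n * (S.L x * (n⁻¹ * m) * (S.L x)⁻¹) := by group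
      rw [h1]
      exact N.mul_mem hn (hNnorm _ (hLmem x) _ (N.mul_mem (N.inv_mem hn) hm))
    · have := conj_L S (hNle hn) x
      rw [this]
      simp [Equiv.Perm.mul_apply]
  · refine ⟨n * (S.L x)⁻¹ * n⁻¹ * m * S.L x, ?_, ?_⟩
    · have h1 : n * (S.L x)⁻¹ * n⁻¹ * m * S.L x
          = n * ((S.L x)⁻¹ * (n⁻¹ * m) * ((S.L x)⁻¹)⁻¹) := by group
      rw [h1]
      exact N.mul_mem hn (hNnorm _ (S.Lmlt.inv_mem (hLmem x)) _
        (N.mul_mem (N.inv_mem hn) hm))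
    · have h := conj_L S (hNle hn) x
      have h2 : (n * S.L x * n⁻¹)⁻¹ = (S.L (n x))⁻¹ := by rw [h]
      have h3 : n * (S.L x)⁻¹ * n⁻¹ = (S.L (n x))⁻¹ := by
        rw [← h2]; group
      calc (n * (S.L x)⁻¹ * n⁻¹ * m * S.L x) ((S.L x)⁻¹ u)
          = (n * (S.L x)⁻¹ * n⁻¹) (m u) := by
            simp [Equiv.Perm.mul_apply]
        _ = (S.L (n x))⁻¹ (m u) := by rw [h3]

theorem stmt6 {Q : Type*} (S : QuandleStr Q) (hfaith : S.Faithful)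
    (N M : Subgroup (Equiv.Perm Q)) (hNle : N ≤ S.Lmlt) (hMle : M ≤ S.Lmlt)
    (hNnorm : ∀ g ∈ S.Lmlt, ∀ n ∈ N, g * n * g⁻¹ ∈ N)
    (hMnorm : ∀ g ∈ S.Lmlt, ∀ n ∈ M, g * n * g⁻¹ ∈ M)
    (hNbot : N ≠ ⊥) (hMbot : M ≠ ⊥) (hNM : N ⊓ M = ⊥) :
    ∃ θ₁ θ₂ : Setoid Q, S.IsCong θ₁ ∧ S.IsCong θ₂ ∧ θ₁ ≠ ⊥ ∧ θ₂ ≠ ⊥ ∧ θ₁ ⊓ θ₂ = ⊥ := by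
  refine ⟨orbSetoid N, orbSetoid M, orb_cong S N hNle hNnorm, orb_cong S M hMle hMnorm,
    ?_, ?_, ?_⟩
  · intro h
    apply hNbot
    ext n
    simp only [Subgroup.mem_bot]
    constructor
    · intro hn
      ext x
      have : (orbSetoid N).r x (n x) := ⟨n, hn, rfl⟩
      rw [h] at this
      exact this.symm
    · rintro rfl; exact N.one_mem
  · intro h
    apply hMbot
    ext n
    simp only [Subgroup.mem_bot]
    constructor
    · intro hn
      ext x
      have : (orbSetoid M).r x (n x) := ⟨n, hn, rfl⟩
      rw [h] at this
      exact this.symm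
    · rintro rfl; exact M.one_mem
  · ext x y
    simp only [Setoid.bot_def]
    constructor
    · rintro ⟨⟨n, hn, rfl⟩, ⟨m, hm, hm2⟩⟩
      have hc : S.L (n x) = S.L x := by
        have hN : S.L (n x) * (S.L x)⁻¹ ∈ N := by
          rw [← conj_L S (hNle hn) x]
          have h1 : n * S.L x * n⁻¹ * (S.L x)⁻¹
              = n * (S.L x * n⁻¹ * (S.L x)⁻¹) := by group
          rw [h1]
          exact N.mul_mem hn (hNnorm _ (Subgroup.subset_closure ⟨x, rfl⟩) _
            (N.inv_mem hn))
        have hM : S.L (n x) * (S.L x)⁻¹ ∈ M := by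
          rw [← hm2, ← conj_L S (hMle hm) x]
          have h1 : m * S.L x * m⁻¹ * (S.L x)⁻¹
              = m * (S.L x * m⁻¹ * (S.L x)⁻¹) := by group
          rw [h1]
          exact M.mul_mem hm (hMnorm _ (Subgroup.subset_closure ⟨x, rfl⟩) _
            (M.inv_mem hm))
        have : S.L (n x) * (S.L x)⁻¹ ∈ N ⊓ M := ⟨hN, hM⟩
        rw [hNM, Subgroup.mem_bot] at this
        calc S.L (n x) = S.L (n x) * (S.L x)⁻¹ * S.L x := by group
          _ = S.L x := by rw [this]; group
      exact (hfaith hc).symm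
    · rintro rfl
      exact ⟨(orbSetoid N).refl x, (orbSetoid M).refl x⟩
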